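/- Let G be a finite connected locally connected graph with diameter at least three, and let x, y be vertices with d(x,y) = diam(G). Define V1 = {u ≠ x : |[u]_x| ≥ 2 and [u]_x ⊆ N(x)} and V2 = {u ≠ x : |[u]_x| ≥ 2, [u]_x ⊄ N(x), and 2·d(x,u) ≤ diam(G)}. Then for every vertex u ≠ x and every v ∈ V1 ∪ V2, the lines line(x,u) and line(y,v) are different. -/

import Mathlib

open SimpleGraph

/-- The line defined by two vertices `a` and `b` of a graph: `{a, b}` together with all
vertices `c` lying on a shortest path through `a`, `b` and `c` (in some order). -/
def SimpleGraph.line {V : Type*} (G : SimpleGraph V) (a b : V) : Set V :=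
  {a, b} ∪ {c | G.dist a b = G.dist a c + G.dist c b ∨
                G.dist a c = G.dist a b + G.dist b c ∨
                G.dist b c = G.dist b a + G.dist a c}

/-- The set of all lines of a graph. -/
def SimpleGraph.lineSet {V : Type*} (G : SimpleGraph V) : Set (Set V) :=
  {s | ∃ a b : V, a ≠ b ∧ s = G.line a b}

/-- A graph is locally connected if the subgraph induced on each neighborhood is connected. -/
def SimpleGraph.LocallyConnected {V : Type*} (G : SimpleGraph V) : Prop :=
  ∀ v : V, (G.induce (G.neighborSet v)).Connected

/-- The class `[u]_z`: all vertices `w ≠ z` defining the same line with `z` as `u` does. -/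
def SimpleGraph.lineClass {V : Type*} (G : SimpleGraph V) (z u : V) : Set V :=
  {w | w ≠ z ∧ G.line z w = G.line z u}

/-- The set `V₁` of vertices whose class w.r.t. `x` has at least two elements and is
contained in the neighborhood of `x`. -/
def SimpleGraph.V1 {V : Type*} (G : SimpleGraph V) (x : V) : Set V :=
  {u | u ≠ x ∧ 2 ≤ (G.lineClass x u).ncard ∧ G.lineClass x u ⊆ G.neighborSet x}

/-- The set `V₂` of vertices whose class w.r.t. `x` has at least two elements, is not
contained in the neighborhood of `x`, and which are at distance at most half the diameter
from `x`. -/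
noncomputable def SimpleGraph.V2 {V : Type*} (G : SimpleGraph V) (x : V) : Set V :=
  {u | u ≠ x ∧ 2 ≤ (G.lineClass x u).ncard ∧ ¬ G.lineClass x u ⊆ G.neighborSet x ∧
       2 * G.dist x u ≤ G.diam}

namespace ChenChvatalAux

variable {V : Type*} {G : SimpleGraph V}

lemma mem_line_iff {a b c : V} :
    c ∈ G.line a b ↔ c = a ∨ c = b ∨ G.dist a b = G.dist a c + G.dist c b ∨
      G.dist a c = G.dist a b + G.dist b c ∨ G.dist b c = G.dist b a + G.dist a c := by
  simp [SimpleGraph.line, Set.mem_union, Set.mem_insert_iff, Set.mem_setOf_eq, or_assoc]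

lemma left_mem_line {a b : V} : a ∈ G.line a b := mem_line_iff.mpr (Or.inl rfl)

lemma right_mem_line {a b : V} : b ∈ G.line a b := mem_line_iff.mpr (Or.inr (Or.inl rfl))

lemma line_exchange {z p q : V} (h : p ∈ G.line z q) : q ∈ G.line z p := by
  rcases mem_line_iff.mp h with h | h | h | h | h
  · subst h
    exact mem_line_iff.mpr (Or.inr <| Or.inr <| Or.inr <| Or.inl (by simp [SimpleGraph.dist_self]))
  · subst h; exact right_mem_line
  · exact mem_line_iff.mpr (Or.inr <| Or.inr <| Or.inr <| Or.inl h)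
  · exact mem_line_iff.mpr (Or.inr <| Or.inr <| Or.inl h)
  · refine mem_line_iff.mpr (Or.inr <| Or.inr <| Or.inr <| Or.inr ?_)
    have e1 : G.dist q p = G.dist p q := SimpleGraph.dist_comm
    have e2 : G.dist q z = G.dist z q := SimpleGraph.dist_comm
    have e3 : G.dist z p = G.dist p z := SimpleGraph.dist_comm
    omega

lemma dist_zero_of_eq {a b : V} (h : a = b) : G.dist a b = 0 := by
  subst h; exact SimpleGraph.dist_self

lemma adj_dist {p q : V} (h : G.Adj p q) : G.dist p q = 1 :=
  SimpleGraph.dist_eq_one_iff_adj.mpr h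

/-- Step along a geodesic: a neighbour one step closer to `q`. -/
lemma step_lemma (hG : G.Connected) {p q : V} (h : 1 ≤ G.dist p q) :
    ∃ t : V, G.Adj p t ∧ G.dist t q + 1 = G.dist p q := by
  obtain ⟨W, hW⟩ := hG.exists_walk_length_eq_dist p q
  cases W with
  | nil => simp at hW; rw [SimpleGraph.dist_self] at h; omega
  | @cons _ t _ ha W' =>
    refine ⟨t, ha, ?_⟩
    have h1 : G.dist t q ≤ W'.length := SimpleGraph.dist_le W'
    have h2 : G.dist p q ≤ G.dist p t + G.dist t q := hG.dist_triangle
    have h3 : G.dist p t = 1 := adj_dist ha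
    simp only [SimpleGraph.Walk.length_cons] at hW
    omega

lemma ivt_walk (hG : G.Connected) {v z : V} {c : ℕ} :
    ∀ {a b : ↑(G.neighborSet v)} (_W : (G.induce (G.neighborSet v)).Walk a b),
      G.dist z ↑a ≤ c → c ≤ G.dist z ↑b → ∃ m : V, G.Adj v m ∧ G.dist z m = c := by
  intro a b W
  induction W with
  | nil =>
    rename_i u
    exact fun h1 h2 => ⟨u, u.2, le_antisymm h1 h2⟩
  | @cons p q r hadj W ih =>
    intro h1 h2
    by_cases he : G.dist z ↑p = c
    · exact ⟨p, p.2, he⟩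
    · have hadj' : G.Adj ↑p ↑q := by simpa using hadj
      have h3 : G.dist z ↑q ≤ G.dist z ↑p + G.dist ↑p ↑q := hG.dist_triangle
      have h4 : G.dist (↑p : V) ↑q = 1 := adj_dist hadj'
      exact ih (by omega) h2

/-- Discrete intermediate value theorem on a connected neighbourhood. -/
lemma ivt (hG : G.Connected) (hlc : G.LocallyConnected) {v z t s : V} {c : ℕ}
    (ht : G.Adj v t) (hs : G.Adj v s)
    (h1 : G.dist z t ≤ c) (h2 : c ≤ G.dist z s) :
    ∃ m : V, G.Adj v m ∧ G.dist z m = c := by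
  have hr : (G.induce (G.neighborSet v)).Reachable ⟨t, ht⟩ ⟨s, hs⟩ :=
    (hlc v).preconnected _ _
  obtain ⟨W⟩ := hr
  exact ivt_walk hG W h1 h2

/-- A neighbour `m` of `B` lies on `line x B` iff `dist x m ≠ dist x B`. -/
lemma nbr_line_iff (hG : G.Connected) {x B m : V} (hB : 1 ≤ G.dist x B) (hm : G.Adj B m) :
    m ∈ G.line x B ↔ G.dist x m ≠ G.dist x B := by
  have hd1 : G.dist B m = 1 := adj_dist hm
  have hd1' : G.dist m B = G.dist B m := SimpleGraph.dist_comm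
  have ht1 : G.dist x m ≤ G.dist x B + G.dist B m := hG.dist_triangle
  have ht2 : G.dist x B ≤ G.dist x m + G.dist m B := hG.dist_triangle
  constructor
  · intro h
    rcases mem_line_iff.mp h with h | h | h | h | h
    · have h0 : G.dist x m = 0 := dist_zero_of_eq h.symm
      omega
    · exact absurd h.symm hm.ne
    · omega
    · omega
    · have e : G.dist B x = G.dist x B := SimpleGraph.dist_comm
      omega
  · intro h
    rcases Nat.lt_or_ge (G.dist x m) (G.dist x B) with hlt | hge
    · exact mem_line_iff.mpr (Or.inr <| Or.inr <| Or.inl (by omega))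
    · exact mem_line_iff.mpr (Or.inr <| Or.inr <| Or.inr <| Or.inl (by omega))

end ChenChvatalAux

open ChenChvatalAux

theorem lines_from_x_and_y_disjoint {V : Type*} [Fintype V] (G : SimpleGraph V)
    (hG : G.Connected) (hlc : G.LocallyConnected) (hdiam : 3 ≤ G.diam)
    {x y : V} (hxy : G.dist x y = G.diam) :
    ∀ u : V, u ≠ x → ∀ v ∈ G.V1 x ∪ G.V2 x, G.line x u ≠ G.line y v := by
  intro u _hu v hv Heq
  have hdle : ∀ a b : V, G.dist a b ≤ G.diam := fun a b =>
    SimpleGraph.dist_le_diam (SimpleGraph.ediam_ne_top_of_diam_ne_zero (by omega))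
  have hpos : ∀ {a b : V}, a ≠ b → 1 ≤ G.dist a b := fun h => hG.pos_dist_of_ne h
  have hzero : ∀ {a b : V}, G.dist a b = 0 → a = b := fun h => (hG.dist_eq_zero_iff).mp h
  -- extract the hypotheses on `v`
  obtain ⟨hvx, h2card, h2k⟩ :
      v ≠ x ∧ 2 ≤ (G.lineClass x v).ncard ∧ 2 * G.dist x v ≤ G.diam := by
    rcases hv with h | h
    · obtain ⟨h1, h2, h3⟩ := h
      have hvmem : v ∈ G.lineClass x v := ⟨h1, rfl⟩
      have hadj : G.Adj x v := h3 hvmem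
      have hd1 : G.dist x v = 1 := adj_dist hadj
      exact ⟨h1, h2, by omega⟩
    · exact ⟨h.1, h.2.1, h.2.2.2⟩
  have hk1 : 1 ≤ G.dist x v := hpos (Ne.symm hvx)
  have hxyne : x ≠ y := by
    intro h
    subst h
    rw [SimpleGraph.dist_self] at hxy
    omega
  have hkD : G.dist x v < G.diam := by omega
  -- v lies strictly between x and y
  have hxL : x ∈ G.line y v := by rw [← Heq]; exact left_mem_line
  have hbv : G.dist y v + G.dist x v = G.diam := by
    have e1 : G.dist y x = G.dist x y := SimpleGraph.dist_comm
    have e2 : G.dist v x = G.dist x v := SimpleGraph.dist_comm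
    have e3 : G.dist v y = G.dist y v := SimpleGraph.dist_comm
    have e4 : G.dist y v ≤ G.diam := hdle y v
    rcases mem_line_iff.mp hxL with h | h | h | h | h
    · exact absurd h hxyne
    · exact absurd h.symm hvx
    · omega
    · omega
    · omega
  have hdy1 : 1 ≤ G.dist v y := by
    have e3 : G.dist v y = G.dist y v := SimpleGraph.dist_comm
    omega
  -- the classmate w
  have huv : u ∈ G.line x v := by
    apply line_exchange
    rw [Heq]
    exact right_mem_line
  obtain ⟨w, hwcl, hwv⟩ := Set.exists_ne_of_one_lt_ncard (s := G.lineClass x v) (by omega) v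
  obtain ⟨hwx, hlw⟩ := hwcl
  have hj1 : 1 ≤ G.dist x w := hpos (Ne.symm hwx)
  have hm1 : 1 ≤ G.dist v w := hpos (fun h => hwv h.symm)
  have huw : u ∈ G.line x w := by rw [hlw]; exact huv
  have hwL : w ∈ G.line y v := by rw [← Heq]; exact line_exchange huw
  have hwin : w ∈ G.line x v := by rw [← hlw]; exact right_mem_line
  have fact5 : G.dist x v = G.dist x w + G.dist v w ∨
      G.dist x w = G.dist x v + G.dist v w ∨ G.dist v w = G.dist x v + G.dist x w := by
    have e1 : G.dist w v = G.dist v w := SimpleGraph.dist_comm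
    have e2 : G.dist v x = G.dist x v := SimpleGraph.dist_comm
    rcases mem_line_iff.mp hwin with h | h | h | h | h
    · exact absurd h hwx
    · exact absurd h hwv
    · left; omega
    · right; left; omega
    · right; right; omega
  have hyv : y ∈ G.line x v := by
    refine mem_line_iff.mpr (Or.inr <| Or.inr <| Or.inr <| Or.inl ?_)
    have e3 : G.dist v y = G.dist y v := SimpleGraph.dist_comm
    omega
  have hyw : y ∈ G.line x w := by rw [hlw]; exact hyv
  by_cases hwy : w = y
  · -- CASE w = y : the line of x and v equals the line of x and y
    subst hwy
    -- now the vertex previously called y is w; hxy : dist x w = diam, hbv in terms of w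
    have hk1' : 1 ≤ G.dist v x := by
      have e : G.dist v x = G.dist x v := SimpleGraph.dist_comm
      omega
    obtain ⟨t, hvt, htd⟩ := step_lemma hG hk1'
    obtain ⟨s, hvs, hsd⟩ := step_lemma hG hdy1
    have htx : G.dist t x + 1 = G.dist x v := by
      have e : G.dist v x = G.dist x v := SimpleGraph.dist_comm
      omega
    have h_t : G.dist w t = G.dist w v + 1 := by
      have tri1 : G.dist x w ≤ G.dist x t + G.dist t w := hG.dist_triangle
      have tri2 : G.dist w t ≤ G.dist w v + G.dist v t := hG.dist_triangle
      have e1 : G.dist v t = 1 := adj_dist hvt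
      have e2 : G.dist x t = G.dist t x := SimpleGraph.dist_comm
      have e3 : G.dist t w = G.dist w t := SimpleGraph.dist_comm
      have e6 : G.dist x w = G.diam := hxy
      omega
    have h_s : G.dist w s + 1 = G.dist w v := by
      have e1 : G.dist s w = G.dist w s := SimpleGraph.dist_comm
      have e2 : G.dist v w = G.dist w v := SimpleGraph.dist_comm
      omega
    obtain ⟨m, hvm, hmd⟩ := ivt (z := w) (c := G.dist w v) hG hlc hvs hvt (by omega) (by omega)
    have iff1 : m ∈ G.line x v ↔ G.dist x m ≠ G.dist x v := nbr_line_iff hG hk1 hvm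
    have hmv1 : G.dist v m = 1 := adj_dist hvm
    have trim : G.dist x m ≤ G.dist x v + G.dist v m := hG.dist_triangle
    have iff2 : m ∈ G.line x w ↔ G.dist x m = G.dist x v := by
      have e2 : G.dist m w = G.dist w m := SimpleGraph.dist_comm
      have e3 : G.dist w x = G.dist x w := SimpleGraph.dist_comm
      have e4 : G.dist w v = G.dist v w := SimpleGraph.dist_comm
      have e6 : G.dist x w = G.diam := hxy
      constructor
      · intro h
        rcases mem_line_iff.mp h with h | h | h | h | h
        · have h0 : G.dist x m = 0 := dist_zero_of_eq h.symm
          -- then dist w m = dist w x = D, but dist w m = dist w v = D - dist x v < D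
          have tri3 : G.dist w x ≤ G.dist w m + G.dist m x := hG.dist_triangle
          have e5 : G.dist m x = G.dist x m := SimpleGraph.dist_comm
          omega
        · have h0 : G.dist w m = 0 := dist_zero_of_eq h.symm
          omega
        · omega
        · omega
        · omega
      · intro h
        exact mem_line_iff.mpr (Or.inr <| Or.inr <| Or.inl (by omega))
    rw [hlw] at iff2
    tauto
  · -- w ≠ y
    have hbw : G.dist x w + G.dist w y = G.diam := by
      have e1 : G.dist y w = G.dist w y := SimpleGraph.dist_comm
      have e2 : G.dist w x = G.dist x w := SimpleGraph.dist_comm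
      have e4 : G.dist x w ≤ G.diam := hdle x w
      have e5 : G.dist w y ≤ G.diam := hdle w y
      rcases mem_line_iff.mp hyw with h | h | h | h | h
      · exact absurd h.symm hxyne
      · exact absurd h.symm hwy
      · -- G.dist x w = D + dist y w  forces w = y
        exfalso
        have : G.dist y w = 0 := by omega
        exact hwy (hzero this).symm
      · omega
      · exfalso
        have : G.dist x w = 0 := by omega
        exact hwx (hzero this).symm
    have hwyd : 1 ≤ G.dist w y := hpos hwy
    rcases fact5 with hA | hB | hC
    · -- CASE A : dist x v = dist x w + dist v w  (w between x and v)
      obtain ⟨p, hvp, hpd⟩ := step_lemma hG hm1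
      -- hpd : dist p w + 1 = dist v w
      have hpx : G.dist x p + 1 = G.dist x v := by
        have tri1 : G.dist x v ≤ G.dist x p + G.dist p v := hG.dist_triangle
        have tri2 : G.dist x p ≤ G.dist x w + G.dist w p := hG.dist_triangle
        have e1 : G.dist p v = G.dist v p := SimpleGraph.dist_comm
        have e2 : G.dist w p = G.dist p w := SimpleGraph.dist_comm
        have e3 : G.dist v p = 1 := adj_dist hvp
        omega
      obtain ⟨q, hvq, hqd⟩ := step_lemma hG hdy1
      -- hqd : dist q y + 1 = dist v y
      have hqx : G.dist x q = G.dist x v + 1 := by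
        have tri1 : G.dist x y ≤ G.dist x q + G.dist q y := hG.dist_triangle
        have tri2 : G.dist x q ≤ G.dist x v + G.dist v q := hG.dist_triangle
        have e1 : G.dist v q = 1 := adj_dist hvq
        have e3 : G.dist v y = G.dist y v := SimpleGraph.dist_comm
        omega
      have hqw : G.dist w q = G.dist v w + 1 := by
        have tri1 : G.dist x q ≤ G.dist x w + G.dist w q := hG.dist_triangle
        have tri2 : G.dist w q ≤ G.dist w v + G.dist v q := hG.dist_triangle
        have e1 : G.dist v q = 1 := adj_dist hvq
        have e2 : G.dist w v = G.dist v w := SimpleGraph.dist_comm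
        omega
      have hpw : G.dist w p + 1 = G.dist v w := by
        have e : G.dist w p = G.dist p w := SimpleGraph.dist_comm
        omega
      obtain ⟨m3, hvm3, hm3⟩ := ivt (z := w) (c := G.dist v w) hG hlc hvp hvq (by omega) (by omega)
      -- hm3 : dist w m3 = dist v w
      have hm3v : G.dist v m3 = 1 := adj_dist hvm3
      have trib1 : G.dist x m3 ≤ G.dist x v + G.dist v m3 := hG.dist_triangle
      have trib2 : G.dist x v ≤ G.dist x m3 + G.dist m3 v := hG.dist_triangle
      have em3 : G.dist m3 v = G.dist v m3 := SimpleGraph.dist_comm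
      have iff1 : m3 ∈ G.line x v ↔ G.dist x m3 ≠ G.dist x v := nbr_line_iff hG hk1 hvm3
      have iff2 : m3 ∈ G.line x w ↔ G.dist x m3 = G.dist x v := by
        have e2 : G.dist m3 w = G.dist w m3 := SimpleGraph.dist_comm
        have e3 : G.dist w x = G.dist x w := SimpleGraph.dist_comm
        constructor
        · intro h
          rcases mem_line_iff.mp h with h | h | h | h | h
          · have h0 : G.dist x m3 = 0 := dist_zero_of_eq h.symm
            omega
          · have h0 : G.dist w m3 = 0 := dist_zero_of_eq h.symm
            omega
          · omega
          · omega
          · omega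
        · intro h
          exact mem_line_iff.mpr (Or.inr <| Or.inr <| Or.inr <| Or.inl (by omega))
      rw [hlw] at iff2
      tauto
    · -- CASE B : dist x w = dist x v + dist v w  (v between x and w)
      have hm1' : 1 ≤ G.dist w v := by
        have e : G.dist w v = G.dist v w := SimpleGraph.dist_comm
        omega
      obtain ⟨p, hwp, hpd⟩ := step_lemma hG hm1'
      -- hpd : dist p v + 1 = dist w v
      have hpx : G.dist x p + 1 = G.dist x w := by
        have tri1 : G.dist x w ≤ G.dist x p + G.dist p w := hG.dist_triangle
        have tri2 : G.dist x p ≤ G.dist x v + G.dist v p := hG.dist_triangle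
        have e1 : G.dist p w = G.dist w p := SimpleGraph.dist_comm
        have e2 : G.dist v p = G.dist p v := SimpleGraph.dist_comm
        have e3 : G.dist w p = 1 := adj_dist hwp
        have e4 : G.dist w v = G.dist v w := SimpleGraph.dist_comm
        omega
      obtain ⟨q, hwq, hqd⟩ := step_lemma hG hwyd
      -- hqd : dist q y + 1 = dist w y
      have hqx : G.dist x q = G.dist x w + 1 := by
        have tri1 : G.dist x y ≤ G.dist x q + G.dist q y := hG.dist_triangle
        have tri2 : G.dist x q ≤ G.dist x w + G.dist w q := hG.dist_triangle
        have e1 : G.dist w q = 1 := adj_dist hwq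
        omega
      have hqv : G.dist v q = G.dist v w + 1 := by
        have tri1 : G.dist x q ≤ G.dist x v + G.dist v q := hG.dist_triangle
        have tri2 : G.dist v q ≤ G.dist v w + G.dist w q := hG.dist_triangle
        have e1 : G.dist w q = 1 := adj_dist hwq
        omega
      have hpv : G.dist v p + 1 = G.dist v w := by
        have e1 : G.dist v p = G.dist p v := SimpleGraph.dist_comm
        have e4 : G.dist w v = G.dist v w := SimpleGraph.dist_comm
        omega
      obtain ⟨m3, hwm3, hm3⟩ := ivt (z := v) (c := G.dist v w) hG hlc hwp hwq (by omega) (by omega)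
      -- hm3 : dist v m3 = dist v w
      have hm3w : G.dist w m3 = 1 := adj_dist hwm3
      have trib1 : G.dist x m3 ≤ G.dist x w + G.dist w m3 := hG.dist_triangle
      have trib2 : G.dist x w ≤ G.dist x m3 + G.dist m3 w := hG.dist_triangle
      have em3 : G.dist m3 w = G.dist w m3 := SimpleGraph.dist_comm
      have iff1 : m3 ∈ G.line x w ↔ G.dist x m3 ≠ G.dist x w := nbr_line_iff hG hj1 hwm3
      have iff2 : m3 ∈ G.line x v ↔ G.dist x m3 = G.dist x w := by
        have e2 : G.dist m3 v = G.dist v m3 := SimpleGraph.dist_comm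
        have e3 : G.dist v x = G.dist x v := SimpleGraph.dist_comm
        constructor
        · intro h
          rcases mem_line_iff.mp h with h | h | h | h | h
          · have h0 : G.dist x m3 = 0 := dist_zero_of_eq h.symm
            omega
          · have h0 : G.dist v m3 = 0 := dist_zero_of_eq h.symm
            omega
          · omega
          · omega
          · omega
        · intro h
          exact mem_line_iff.mpr (Or.inr <| Or.inr <| Or.inr <| Or.inl (by omega))
      rw [← hlw] at iff2
      tauto
    · -- CASE C : dist v w = dist x v + dist x w  (x between v and w)
      have hkjD : G.dist x v + G.dist x w = G.diam := by
        have e1 : G.dist y w = G.dist w y := SimpleGraph.dist_comm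
        have e2 : G.dist w v = G.dist v w := SimpleGraph.dist_comm
        have e3 : G.dist v y = G.dist y v := SimpleGraph.dist_comm
        rcases mem_line_iff.mp hwL with h | h | h | h | h
        · exact absurd h hwy
        · exact absurd h hwv
        · omega
        · omega
        · omega
      have hj2 : 2 ≤ G.dist x w := by omega
      obtain ⟨s, hvs, hsd⟩ := step_lemma hG hdy1
      -- hsd : dist s y + 1 = dist v y
      have hsx : G.dist x s = G.dist x v + 1 := by
        have tri1 : G.dist x y ≤ G.dist x s + G.dist s y := hG.dist_triangle
        have tri2 : G.dist x s ≤ G.dist x v + G.dist v s := hG.dist_triangle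
        have e1 : G.dist v s = 1 := adj_dist hvs
        have e3 : G.dist v y = G.dist y v := SimpleGraph.dist_comm
        omega
      have hsv1 : G.dist v s = 1 := adj_dist hvs
      have hs_in : s ∈ G.line x v :=
        mem_line_iff.mpr (Or.inr <| Or.inr <| Or.inr <| Or.inl (by omega))
      rw [← hlw] at hs_in
      have trisw : G.dist v w ≤ G.dist v s + G.dist s w := hG.dist_triangle
      have e2 : G.dist s w = G.dist w s := SimpleGraph.dist_comm
      have e3 : G.dist w x = G.dist x w := SimpleGraph.dist_comm
      have e4 : G.dist w s ≤ G.diam := hdle w s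
      rcases mem_line_iff.mp hs_in with h | h | h | h | h
      · have h0 : G.dist x s = 0 := dist_zero_of_eq h.symm
        omega
      · have h0 : G.dist w s = 0 := dist_zero_of_eq h.symm
        omega
      · omega
      · omega
      · omega
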